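/- Let φ : [0,∞) → [0,∞) be an unbounded, increasing, continuous function with φ(0) = 0 and φ(x) > 0 for x > 0. Suppose the limit α := lim_{t→0⁺} ln M(t,φ)/ln t exists in ℝ and let q > 0 with q < α. Then lim_{t→0⁺} t^q/φ(t) = ∞ and lim_{t→∞} t^q/φ(t) = 0. -/

import Mathlib

open Set Filter

/-- `M(t,φ) = sup_{x>0} φ(tx)/φ(x)` (as a real-valued `sSup`; it is the honest
supremum whenever the set is bounded above). -/
noncomputable def Mfun (φ : ℝ → ℝ) (t : ℝ) : ℝ :=
  sSup ((fun x => φ (t * x) / φ x) '' Ioi 0)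

/-- `ψ` is an increasing homeomorphism of `[0,∞)` onto itself. -/
def IncHomeoOnIci (ψ : ℝ → ℝ) : Prop :=
  ψ 0 = 0 ∧ StrictMonoOn ψ (Ici 0) ∧ ContinuousOn ψ (Ici 0) ∧
  MapsTo ψ (Ici 0) (Ici 0) ∧ SurjOn ψ (Ici 0) (Ici 0)

lemma le_Mfun_aux (φ : ℝ → ℝ) (hmono : StrictMonoOn φ (Ici 0))
    (hpos : ∀ x : ℝ, 0 < x → 0 < φ x)
    (t : ℝ) (ht0 : 0 < t) (ht1 : t ≤ 1) (x : ℝ) (hx : 0 < x) :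
    φ (t * x) / φ x ≤ Mfun φ t := by
  apply le_csSup
  · refine ⟨1, ?_⟩
    rintro y ⟨z, hz, rfl⟩
    have hz : (0:ℝ) < z := hz
    have h1 : φ (t * z) ≤ φ z :=
      hmono.monotoneOn (mem_Ici.mpr (mul_pos ht0 hz).le) (mem_Ici.mpr hz.le)
        (mul_le_of_le_one_left hz.le ht1)
    exact div_le_one_of_le₀ h1 (hpos z hz).le
  · exact ⟨x, hx, rfl⟩

theorem limits_of_lt_alpha
(φ : ℝ → ℝ) (hmono : StrictMonoOn φ (Ici 0)) (hcont : ContinuousOn φ (Ici 0))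
    (hzero : φ 0 = 0) (hpos : ∀ x : ℝ, 0 < x → 0 < φ x)
    (hunbdd : ¬ BddAbove (φ '' Ici 0))
    (α : ℝ)
    (hα : Tendsto (fun t : ℝ => Real.log (Mfun φ t) / Real.log t)
      (nhdsWithin 0 (Ioi 0)) (nhds α))
    (q : ℝ) (hq : 0 < q) (hqα : q < α) :
    Tendsto (fun t : ℝ => t ^ q / φ t) (nhdsWithin 0 (Ioi 0)) atTop ∧
    Tendsto (fun t : ℝ => t ^ q / φ t) atTop (nhds 0) := by
  set q' : ℝ := (q + α) / 2 with hq'def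
  have hqq' : q < q' := by simp [hq'def]; linarith
  have hq'α : q' < α := by simp [hq'def]; linarith
  have hφ1 : 0 < φ 1 := hpos 1 one_pos
  -- key bound: for 0 < t < 1 with log M / log t > q', we get M t < t ^ q'
  have key : ∀ t : ℝ, 0 < t → t < 1 → q' < Real.log (Mfun φ t) / Real.log t →
      Mfun φ t < t ^ q' := by
    intro t ht0 ht1 hlt
    have hMlb : φ t / φ 1 ≤ Mfun φ t := by
      have := le_Mfun_aux φ hmono hpos t ht0 ht1.le 1 one_pos
      simpa using this
    have hMpos : 0 < Mfun φ t := lt_of_lt_of_le (div_pos (hpos t ht0) hφ1) hMlb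
    have hlogt : Real.log t < 0 := Real.log_neg ht0 ht1
    have hlog : Real.log (Mfun φ t) < q' * Real.log t :=
      (lt_div_iff_of_neg hlogt).mp hlt
    calc Mfun φ t = Real.exp (Real.log (Mfun φ t)) := (Real.exp_log hMpos).symm
      _ < Real.exp (q' * Real.log t) := Real.exp_lt_exp.mpr hlog
      _ = t ^ q' := by rw [Real.rpow_def_of_pos ht0, mul_comm]
  -- eventual inequality near 0
  have hev : ∀ᶠ t in nhdsWithin (0:ℝ) (Ioi 0), Mfun φ t < t ^ q' := by
    have h1 : ∀ᶠ t in nhdsWithin (0:ℝ) (Ioi 0),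
        q' < Real.log (Mfun φ t) / Real.log t := hα.eventually (eventually_gt_nhds hq'α)
    have h2 : ∀ᶠ t in nhdsWithin (0:ℝ) (Ioi 0), t ∈ Ioo (0:ℝ) 1 :=
      Ioo_mem_nhdsGT_of_mem (by constructor <;> norm_num)
    filter_upwards [h1, h2] with t h1 h2
    exact key t h2.1 h2.2 h1
  constructor
  · -- limit at 0⁺
    have hlow : ∀ᶠ t in nhdsWithin (0:ℝ) (Ioi 0),
        t ^ (q - q') / φ 1 ≤ t ^ q / φ t := by
      have h2 : ∀ᶠ t in nhdsWithin (0:ℝ) (Ioi 0), t ∈ Ioo (0:ℝ) 1 :=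
        Ioo_mem_nhdsGT_of_mem (by constructor <;> norm_num)
      filter_upwards [hev, h2] with t hM ht
      have ht0 := ht.1
      have hMlb : φ t / φ 1 ≤ Mfun φ t := by
        have := le_Mfun_aux φ hmono hpos t ht0 ht.2.le 1 one_pos
        simpa using this
      have hφt : φ t ≤ t ^ q' * φ 1 := by
        have := (div_le_iff₀ hφ1).mp hMlb
        nlinarith [hM, hφ1]
      have hden : 0 < φ t := hpos t ht0
      have h3 : t ^ q / (t ^ q' * φ 1) ≤ t ^ q / φ t :=
        div_le_div_of_nonneg_left (Real.rpow_pos_of_pos ht0 q).le hden hφt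
      calc t ^ (q - q') / φ 1 = t ^ q / (t ^ q' * φ 1) := by
            rw [Real.rpow_sub ht0, div_div]
        _ ≤ t ^ q / φ t := h3
    refine tendsto_atTop_mono' _ hlow ?_
    have h1 : Tendsto (fun t : ℝ => t ^ (q - q')) (nhdsWithin 0 (Ioi 0)) atTop := by
      have := NNReal.tendsto_rpow_atTop (y := q' - q) (by linarith)
      -- use: t ^ (q - q') = (t⁻¹) ^ (q' - q)
      have hinv : Tendsto (fun t : ℝ => t⁻¹) (nhdsWithin (0:ℝ) (Ioi 0)) atTop :=
        tendsto_inv_nhdsGT_zero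
      have hrpow : Tendsto (fun x : ℝ => x ^ (q' - q)) atTop atTop :=
        tendsto_rpow_atTop (by linarith)
      have := hrpow.comp hinv
      refine this.congr' ?_
      filter_upwards [self_mem_nhdsWithin] with t ht
      have ht0 : (0:ℝ) < t := ht
      simp only [Function.comp]
      rw [Real.inv_rpow ht0.le, ← Real.rpow_neg ht0.le, neg_sub]
    exact h1.atTop_div_const hφ1
  · -- limit at ∞
    have hub : ∀ᶠ t in atTop, t ^ q / φ t ≤ t ^ (q - q') / φ 1 := by
      have h1 : ∀ᶠ s in nhdsWithin (0:ℝ) (Ioi 0), Mfun φ s < s ^ q' := hev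
      -- transfer via s = 1/t
      have hinv : Tendsto (fun t : ℝ => t⁻¹) atTop (nhdsWithin (0:ℝ) (Ioi 0)) :=
        tendsto_inv_atTop_nhdsGT_zero -- gives nhdsWithin 0 (Ioi 0)?
      have h2 : ∀ᶠ t in atTop, Mfun φ t⁻¹ < (t⁻¹) ^ q' := hinv.eventually h1
      filter_upwards [h2, eventually_ge_atTop (1:ℝ)] with t hM ht1
      have ht0 : (0:ℝ) < t := lt_of_lt_of_le one_pos ht1
      have hinv0 : 0 < t⁻¹ := inv_pos.mpr ht0
      have hinv1 : t⁻¹ ≤ 1 := inv_le_one_of_one_le₀ ht1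
      have hMlb : φ 1 / φ t ≤ Mfun φ t⁻¹ := by
        have := le_Mfun_aux φ hmono hpos t⁻¹ hinv0 hinv1 t ht0
        rwa [inv_mul_cancel₀ ht0.ne'] at this
      have hφt : 0 < φ t := hpos t ht0
      have hpow : 0 < t ^ q' := Real.rpow_pos_of_pos ht0 q'
      have hlb : φ 1 * t ^ q' ≤ φ t := by
        have h3 : φ 1 / φ t ≤ 1 / t ^ q' := by
          calc φ 1 / φ t ≤ Mfun φ t⁻¹ := hMlb
            _ ≤ (t⁻¹) ^ q' := hM.le
            _ = 1 / t ^ q' := by rw [Real.inv_rpow ht0.le, inv_eq_one_div]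
        have := (div_le_div_iff₀ hφt hpow).mp h3
        linarith
      have hqpos : 0 < t ^ q := Real.rpow_pos_of_pos ht0 q
      have h4 : t ^ q / φ t ≤ t ^ q / (φ 1 * t ^ q') := by
        apply div_le_div_of_nonneg_left hqpos.le _ hlb
        positivity
      calc t ^ q / φ t ≤ t ^ q / (φ 1 * t ^ q') := h4
        _ = t ^ (q - q') / φ 1 := by
            rw [Real.rpow_sub ht0]
            rw [div_div, mul_comm (φ 1)]
    have hnn : ∀ᶠ t in atTop, 0 ≤ t ^ q / φ t := by
      filter_upwards [eventually_gt_atTop (0:ℝ)] with t ht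
      exact div_nonneg (Real.rpow_pos_of_pos ht q).le (hpos t ht).le
    have hlim : Tendsto (fun t : ℝ => t ^ (q - q') / φ 1) atTop (nhds 0) := by
      have := (tendsto_rpow_neg_atTop (y := q' - q) (by linarith)).div_const (φ 1)
      simpa [neg_sub, zero_div] using this.congr (fun t => by rw [neg_sub])
    exact squeeze_zero' hnn hub hlim
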